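/- Let m > 1, a > 0, b > 0, q a positive integer, w ∈ (0,∞)^q, and let (λ_k)_{1≤k≤q} be positive reals with Σ_{k=1}^q λ_k = 1. Then (a + 2b) Σ_{k=1}^q λ_k (w_k)^{1−m} − a (Σ_{k=1}^q λ_k w_k)^{1−m} + b(m−1) (Σ_{k=1}^q λ_k w_k)² ≥ b(m+1), and equality holds if and only if w_k = 1 for all k. -/

import Mathlib

open scoped BigOperators
noncomputable section

/-- Internal (diffusion) part: sum of (X_{i+1} - X_i)^(1-m) over consecutive gaps. -/
def gapSum (m : ℝ) (p : ℕ) (X : EuclideanSpace ℝ (Fin p)) : ℝ :=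
  ∑ i : Fin p, if h : (i : ℕ) + 1 < p then (X ⟨(i : ℕ) + 1, h⟩ - X i) ^ (1 - m) else 0

/-- Interaction part: sum of |X_i - X_j|^(1-m) over ordered pairs i ≠ j. -/
def pairSum (m : ℝ) (p : ℕ) (X : EuclideanSpace ℝ (Fin p)) : ℝ :=
  ∑ i : Fin p, ∑ j : Fin p, if i ≠ j then |X i - X j| ^ (1 - m) else 0

/-- The discrete free energy F^p_m. -/
def FF (m χ : ℝ) (p : ℕ) (X : EuclideanSpace ℝ (Fin p)) : ℝ :=
  (m - 1)⁻¹ * gapSum m p X - (χ / (m - 1)) * pairSum m p X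

/-- Membership in R^p: strictly increasing with zero mean. -/
def memR (p : ℕ) (X : EuclideanSpace ℝ (Fin p)) : Prop :=
  (StrictMono fun i => X i) ∧ ∑ i, X i = 0

/-- The critical constant C_p, with 1/C_p the sup of the HLS ratio. -/
def Cp (m : ℝ) (p : ℕ) : ℝ :=
  (sSup {r : ℝ | ∃ X : EuclideanSpace ℝ (Fin p), memR p X ∧
    r = pairSum m p X / gapSum m p X})⁻¹

/-- The functional F^p_{m,α} with confining quadratic potential. -/
def FFa (m χ α : ℝ) (p : ℕ) (X : EuclideanSpace ℝ (Fin p)) : ℝ :=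
  FF m χ p X + α / 2 * ‖X‖ ^ 2

/-- H^N_{m+1}(Y) = |∇F^N_m(Y)|² − ((m−1) F^N_m(Y))². -/
def Hfun (m χ : ℝ) (N : ℕ) (Y : EuclideanSpace ℝ (Fin N)) : ℝ :=
  ‖gradient (FF m χ N) Y‖ ^ 2 - ((m - 1) * FF m χ N Y) ^ 2

/-- X : [0,T) → R^N is a solution of the gradient flow of F^N_m. -/
def isGFlow (m χ : ℝ) (N : ℕ) (T : ℝ) (X : ℝ → EuclideanSpace ℝ (Fin N)) : Prop :=
  ∀ t ∈ Set.Ico (0 : ℝ) T, memR N (X t) ∧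
    HasDerivWithinAt X (-(gradient (FF m χ N) (X t))) (Set.Ico (0 : ℝ) T) t

/-- The gap Y_{i+1} - Y_i (0 if i+1 is out of range). -/
def gapAt (N : ℕ) (Y : EuclideanSpace ℝ (Fin N)) (i : ℕ) : ℝ :=
  if h : i + 1 < N then Y ⟨i + 1, h⟩ - Y ⟨i, Nat.lt_of_succ_lt h⟩ else 0

section AuxLemmas
open Set

lemma strictConvexOn_rpow_neg {p : ℝ} (hp : p < 0) :
    StrictConvexOn ℝ (Set.Ioi (0:ℝ)) (fun x : ℝ => x ^ p) := by
  apply strictConvexOn_of_deriv2_pos (convex_Ioi 0)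
  · exact fun x hx => (Real.continuousAt_rpow_const x p
      (Or.inl (ne_of_gt hx))).continuousWithinAt
  · intro x hx
    rw [interior_Ioi] at hx
    have hx0 : (0:ℝ) < x := hx
    have h2 : deriv (deriv (fun y : ℝ => y ^ p)) x
        = deriv (fun y : ℝ => p * y ^ (p-1)) x := by
      apply Filter.EventuallyEq.deriv_eq
      filter_upwards [Ioi_mem_nhds hx0] with y hy
      exact Real.deriv_rpow_const y p
    have h3 : deriv (fun y : ℝ => p * y ^ (p-1)) x = p * ((p-1) * x ^ (p-1-1)) := by
      rw [deriv_const_mul _ ((Real.differentiableAt_rpow_const_of_ne (p-1)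
        (ne_of_gt hx0)))]
      rw [Real.deriv_rpow_const x (p-1)]
    have hpos : 0 < p * ((p-1) * x ^ (p-1-1)) := by
      have h5 := Real.rpow_pos_of_pos hx0 (p-1-1)
      have h6 : 0 < p * (p-1) := mul_pos_of_neg_of_neg hp (by linarith)
      calc (0:ℝ) < (p * (p-1)) * x ^ (p-1-1) := mul_pos h6 h5
        _ = p * ((p-1) * x ^ (p-1-1)) := by ring
    simp only [Function.iterate_succ, Function.iterate_zero, Function.comp, id]
    rw [h2, h3]
    exact hpos

lemma tangent_rpow {p : ℝ} (hp : p < 0) {x : ℝ} (hx : 0 < x) (hne : x ≠ 1) :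
    1 + p * (x - 1) < x ^ p := by
  have hd : HasDerivAt (fun y : ℝ => y ^ p) p 1 := by
    have := Real.hasDerivAt_rpow_const (x := (1:ℝ)) (p := p) (Or.inl one_ne_zero)
    simpa using this
  have hcv := strictConvexOn_rpow_neg hp
  rcases lt_or_gt_of_ne hne with h | h
  · have hs := hcv.slope_lt_of_hasDerivAt (Set.mem_Ioi.2 hx) (Set.mem_Ioi.2 one_pos) h hd
    rw [slope_def_field] at hs
    have h1 : (0:ℝ) < 1 - x := by linarith
    rw [div_lt_iff₀ h1] at hs
    simp only [Real.one_rpow] at hs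
    nlinarith
  · have hs := hcv.lt_slope_of_hasDerivAt (Set.mem_Ioi.2 one_pos) (Set.mem_Ioi.2 hx) h hd
    rw [slope_def_field] at hs
    have h1 : (0:ℝ) < x - 1 := by linarith
    rw [lt_div_iff₀ h1] at hs
    simp only [Real.one_rpow] at hs
    nlinarith

lemma tangent_rpow_le {p : ℝ} (hp : p < 0) {x : ℝ} (hx : 0 < x) :
    1 + p * (x - 1) ≤ x ^ p := by
  by_cases hne : x = 1
  · simp [hne]
  · exact (tangent_rpow hp hx hne).le

theorem stmt9 (m : ℝ) (hm : 1 < m) (a b : ℝ) (ha : 0 < a) (hb : 0 < b)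
    (q : ℕ) (hq : 1 ≤ q) (w lam : Fin q → ℝ) (hw : ∀ k, 0 < w k)
    (hlam : ∀ k, 0 < lam k) (hsum : ∑ k, lam k = 1) :
    b * (m + 1) ≤ (a + 2 * b) * (∑ k, lam k * (w k) ^ (1 - m))
      - a * (∑ k, lam k * w k) ^ (1 - m) + b * (m - 1) * (∑ k, lam k * w k) ^ 2 ∧
    ((a + 2 * b) * (∑ k, lam k * (w k) ^ (1 - m))
      - a * (∑ k, lam k * w k) ^ (1 - m) + b * (m - 1) * (∑ k, lam k * w k) ^ 2 = b * (m + 1)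
      ↔ ∀ k, w k = 1) := by
  have hp : (1:ℝ) - m < 0 := by linarith
  have hne : Nonempty (Fin q) := Fin.pos_iff_nonempty.mp (by omega)
  set W := ∑ k, lam k * w k with hWdef
  set S := ∑ k, lam k * (w k) ^ (1 - m) with hSdef
  have hW : 0 < W := by
    rw [hWdef]
    exact Finset.sum_pos (fun k _ => mul_pos (hlam k) (hw k)) Finset.univ_nonempty
  have hJ : W ^ (1 - m) ≤ S := by
    rw [hWdef, hSdef]
    have := (strictConvexOn_rpow_neg hp).convexOn.map_sum_le
      (t := Finset.univ) (w := lam) (p := w)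
      (fun k _ => (hlam k).le) hsum (fun k _ => Set.mem_Ioi.2 (hw k))
    simpa [smul_eq_mul] using this
  have hT : m + 1 ≤ 2 * W ^ (1 - m) + (m - 1) * W ^ 2 := by
    have h1 := tangent_rpow_le hp hW
    nlinarith [sq_nonneg (W - 1)]
  by_cases hone : ∀ k, w k = 1
  · have hW1 : W = 1 := by
      rw [hWdef, Finset.sum_congr rfl (fun k _ => by rw [hone k, mul_one]), hsum]
    have hS1 : S = 1 := by
      rw [hSdef, Finset.sum_congr rfl
        (fun k _ => by rw [hone k, Real.one_rpow, mul_one]), hsum]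
    have hE : (a + 2 * b) * S - a * W ^ (1 - m) + b * (m - 1) * W ^ 2 = b * (m + 1) := by
      rw [hW1, hS1, Real.one_rpow]; ring
    exact ⟨hE.ge, iff_of_true hE hone⟩
  · rcases not_forall.1 hone with ⟨k₀, hk₀⟩
    have hlt : b * (m + 1) < (a + 2 * b) * S - a * W ^ (1 - m) + b * (m - 1) * W ^ 2 := by
      by_cases hW1 : W = 1
      · have hpair : ∃ j ∈ Finset.univ, ∃ k ∈ (Finset.univ : Finset (Fin q)), w j ≠ w k := by
          by_contra hall
          push_neg at hall
          have hc : ∀ k, w k = w k₀ := fun k =>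
            hall k (Finset.mem_univ k) k₀ (Finset.mem_univ k₀)
          have hWc : W = w k₀ := by
            rw [hWdef, Finset.sum_congr rfl (fun k _ => by rw [hc k]),
              ← Finset.sum_mul, hsum, one_mul]
          exact hk₀ (by rw [← hWc, hW1])
        have hJs : W ^ (1 - m) < S := by
          rw [hWdef, hSdef]
          have := (strictConvexOn_rpow_neg hp).map_sum_lt
            (t := Finset.univ) (w := lam) (p := w)
            (fun k _ => hlam k) hsum (fun k _ => Set.mem_Ioi.2 (hw k)) hpair
          simpa [smul_eq_mul] using this
        nlinarith [mul_lt_mul_of_pos_left hJs (show (0:ℝ) < a + 2 * b by linarith),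
          mul_le_mul_of_nonneg_left hT hb.le]
      · have hTs : m + 1 < 2 * W ^ (1 - m) + (m - 1) * W ^ 2 := by
          have h1 := tangent_rpow hp hW hW1
          nlinarith [sq_nonneg (W - 1)]
        nlinarith [mul_le_mul_of_nonneg_left hJ (show (0:ℝ) ≤ a + 2 * b by linarith),
          mul_lt_mul_of_pos_left hTs hb]
    exact ⟨hlt.le, ⟨fun heq => absurd heq hlt.ne', fun hall => absurd hall hone⟩⟩

end AuxLemmas
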